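/- For ω₁, ω₂, ω₃ ∈ ℝ, let a_t^{(0)} = cos(ω_t/2), a_t^{(1)} = sin(ω_t/2), and define U_{ω₁,ω₂,ω₃}(u₁, u₂) = a₁^{(0)}a₂^{(0)}a₃^{(0)} - a₁^{(0)}a₂^{(1)}a₃^{(1)} u₂ - a₁^{(1)}a₂^{(0)}a₃^{(1)} u₁u₂ - a₁^{(1)}a₂^{(1)}a₃^{(0)} u₁ for complex u₁, u₂. Then the set A_{ω₁,ω₂,ω₃} = {Z_{θ₀} X_{ω₁} Z_{θ₁} X_{ω₂} Z_{θ₂} X_{ω₃} Z_{θ₃} : θ₀ + θ₁ + θ₂ + θ₃ = 0} covers SU(2)/{±I} (for every V ∈ SU(2), some element of A_{ω₁,ω₂,ω₃} lies in {V, -V}) if and only if for every z ∈ ℂ with |z| ≤ 1 there exist u₁, u₂ ∈ ℂ with |u₁| = |u₂| = 1 such that U_{ω₁,ω₂,ω₃}(u₁, u₂) ∈ {z, -z}. -/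

import Mathlib

open Complex Matrix

noncomputable def Zgate (θ : ℝ) : Matrix (Fin 2) (Fin 2) ℂ :=
  !![exp (θ / 2 * I), 0; 0, exp (-(θ / 2) * I)]

noncomputable def Xgate (σ : ℝ) : Matrix (Fin 2) (Fin 2) ℂ :=
  !![(Real.cos (σ / 2) : ℂ), -I * Real.sin (σ / 2); -I * Real.sin (σ / 2), Real.cos (σ / 2)]

/-- The complex function `U_{ω₁,ω₂,ω₃}(u₁, u₂)` from the uniqueness analysis. -/
noncomputable def Ufun (ω₁ ω₂ ω₃ : ℝ) (u₁ u₂ : ℂ) : ℂ :=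
  (Real.cos (ω₁ / 2) * Real.cos (ω₂ / 2) * Real.cos (ω₃ / 2) : ℝ) -
    (Real.cos (ω₁ / 2) * Real.sin (ω₂ / 2) * Real.sin (ω₃ / 2) : ℝ) * u₂ -
    (Real.sin (ω₁ / 2) * Real.cos (ω₂ / 2) * Real.sin (ω₃ / 2) : ℝ) * (u₁ * u₂) -
    (Real.sin (ω₁ / 2) * Real.sin (ω₂ / 2) * Real.cos (ω₃ / 2) : ℝ) * u₁

set_option maxHeartbeats 1000000 in
lemma entry00 (θ₀ θ₁ θ₂ θ₃ ω₁ ω₂ ω₃ : ℝ) (h : θ₀+θ₁+θ₂+θ₃ = 0) :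
  (Zgate θ₀ * Xgate ω₁ * Zgate θ₁ * Xgate ω₂ * Zgate θ₂ * Xgate ω₃ * Zgate θ₃) 0 0
    = Ufun ω₁ ω₂ ω₃ (exp (-θ₁ * I)) (exp (-θ₂ * I)) := by
  have esplit : ∀ x : ℝ, exp (-((x:ℂ) * I)) = exp (-((x:ℂ)/2 * I)) * exp (-((x:ℂ)/2 * I)) := by
    intro x; rw [← Complex.exp_add]; ring_nf
  simp [Zgate, Xgate, Ufun, Matrix.mul_fin_two, esplit]
  set g0 := exp ((θ₀:ℂ)/2 * I) with hg0def
  set g1 := exp ((θ₁:ℂ)/2 * I) with hg1def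
  set g2 := exp ((θ₂:ℂ)/2 * I) with hg2def
  set g3 := exp ((θ₃:ℂ)/2 * I) with hg3def
  set f1 := exp (-((θ₁:ℂ)/2 * I)) with hf1def
  set f2 := exp (-((θ₂:ℂ)/2 * I)) with hf2def
  have hrel : g0 * g1 * g2 * g3 = 1 := by
    rw [hg0def, hg1def, hg2def, hg3def, ← Complex.exp_add, ← Complex.exp_add, ← Complex.exp_add]
    have : ((θ₀:ℂ)/2*I) + ((θ₁:ℂ)/2*I) + ((θ₂:ℂ)/2*I) + ((θ₃:ℂ)/2*I)
        = ((θ₀+θ₁+θ₂+θ₃:ℝ):ℂ)/2*I := by push_cast; ring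
    rw [this, h]; simp
  have hq1 : g1 * f1 = 1 := by
    rw [hg1def, hf1def, ← Complex.exp_add]; simp
  have hq2 : g2 * f2 = 1 := by
    rw [hg2def, hf2def, ← Complex.exp_add]; simp
  have hI : I * I = -1 := Complex.I_mul_I
  set c1 := Complex.cos ((ω₁:ℂ)/2)
  set c2 := Complex.cos ((ω₂:ℂ)/2)
  set c3 := Complex.cos ((ω₃:ℂ)/2)
  set s1 := Complex.sin ((ω₁:ℂ)/2)
  set s2 := Complex.sin ((ω₂:ℂ)/2)
  set s3 := Complex.sin ((ω₃:ℂ)/2)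
  linear_combination (c1*c2*c3 - s1*s2*c3*f1^2 - c1*s2*s3*f2^2 - s1*c2*s3*f1^2*f2^2) * hrel
    + (s1*s2*c3*f1*g0*g2*g3 + s1*c2*s3*f1*f2*g0*g3) * hq1
    + (c1*s2*s3*f2*g0*g1*g3 + s1*c2*s3*f1^2*f2*g0*g1*g3) * hq2
    + (g0*f1*g2*g3*s1*s2*c3 + g0*g1*f2*g3*c1*s2*s3 + g0*f1*f2*g3*s1*c2*s3) * hI

lemma Zgate_mem (θ : ℝ) : Zgate θ ∈ Matrix.specialUnitaryGroup (Fin 2) ℂ := by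
  rw [Matrix.mem_specialUnitaryGroup_iff, Matrix.mem_unitaryGroup_iff]
  constructor
  · show Zgate θ * (Zgate θ)ᴴ = 1
    ext i j
    fin_cases i <;> fin_cases j <;>
      simp [Zgate, Matrix.mul_apply, Fin.sum_univ_succ, ← Complex.exp_conj, ← Complex.exp_add,
        _root_.map_mul, map_ofNat, Complex.conj_I, Complex.conj_ofReal]
  · simp [Zgate, Matrix.det_fin_two_of, ← Complex.exp_add]

set_option linter.unreachableTactic false in
set_option linter.unusedTactic false in
lemma Xgate_mem (σ : ℝ) : Xgate σ ∈ Matrix.specialUnitaryGroup (Fin 2) ℂ := by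
  have hcs : (Real.cos (σ/2) : ℂ)^2 + (Real.sin (σ/2) : ℂ)^2 = 1 := by
    exact_mod_cast congrArg (Complex.ofReal) (Real.cos_sq_add_sin_sq (σ/2))
  rw [Matrix.mem_specialUnitaryGroup_iff, Matrix.mem_unitaryGroup_iff]
  constructor
  · show Xgate σ * (Xgate σ)ᴴ = 1
    ext i j
    fin_cases i <;> fin_cases j <;>
      simp [Xgate, Matrix.mul_apply, Fin.sum_univ_succ, Complex.conj_I, Complex.conj_ofReal,
        Matrix.one_apply, -Complex.ofReal_cos, -Complex.ofReal_sin] <;>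
      first
        | ring1
        | linear_combination hcs
        | linear_combination -hcs
        | linear_combination (-(Real.sin (σ/2):ℂ)^2) * Complex.I_sq
        | linear_combination (-(Real.sin (σ/2):ℂ)^2) * Complex.I_sq + hcs
        | linear_combination (-(Real.sin (σ/2):ℂ)^2) * Complex.I_sq - hcs
        | linear_combination (-(Real.sin (σ/2):ℂ)^2) * Complex.I_sq + 2*hcs
  · simp [Xgate, Matrix.det_fin_two_of, -Complex.ofReal_cos, -Complex.ofReal_sin]
    first
      | ring1
      | linear_combination hcs
      | linear_combination -hcs
      | linear_combination (-(Real.sin (σ/2):ℂ)^2) * Complex.I_sq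
      | linear_combination (-(Real.sin (σ/2):ℂ)^2) * Complex.I_sq + hcs
      | linear_combination (-(Real.sin (σ/2):ℂ)^2) * Complex.I_sq - hcs
      | linear_combination (-(Real.sin (σ/2):ℂ)^2) * Complex.I_sq + 2*hcs

lemma su2_struct {V : Matrix (Fin 2) (Fin 2) ℂ} (h : V ∈ Matrix.specialUnitaryGroup (Fin 2) ℂ) :
    V = !![V 0 0, -(starRingEnd ℂ) (V 1 0); V 1 0, (starRingEnd ℂ) (V 0 0)] ∧
      ‖V 0 0‖^2 + ‖V 1 0‖^2 = 1 := by
  rw [Matrix.mem_specialUnitaryGroup_iff, Matrix.mem_unitaryGroup_iff'] at h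
  obtain ⟨hu, hd⟩ := h
  have hadj : Vᴴ = adjugate V := by
    have h2 : V * adjugate V = 1 := by rw [Matrix.mul_adjugate, hd, one_smul]
    calc Vᴴ = Vᴴ * (V * adjugate V) := by rw [h2, mul_one]
    _ = (Vᴴ * V) * adjugate V := by rw [mul_assoc]
    _ = adjugate V := by show star V * V * _ = _; rw [hu, one_mul]
  rw [Matrix.adjugate_fin_two] at hadj
  have h00 : (starRingEnd ℂ) (V 0 0) = V 1 1 := by
    have := congrFun (congrFun hadj 0) 0
    simpa [Matrix.conjTranspose_apply] using this
  have h01 : V 0 1 = -(starRingEnd ℂ) (V 1 0) := by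
    have := congrFun (congrFun hadj 0) 1
    simp [Matrix.conjTranspose_apply] at this
    linear_combination this
  have hnorm : ‖V 0 0‖^2 + ‖V 1 0‖^2 = 1 := by
    have := congrFun (congrFun hu 0) 0
    simp [Matrix.mul_apply, Fin.sum_univ_succ, Matrix.conjTranspose_apply, Matrix.one_apply] at this
    have h1 : ((Complex.normSq (V 0 0) + Complex.normSq (V 1 0) : ℝ) : ℂ) = 1 := by
      push_cast [Complex.normSq_eq_conj_mul_self]
      linear_combination this
    have h2 : Complex.normSq (V 0 0) + Complex.normSq (V 1 0) = 1 := by exact_mod_cast h1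
    rw [Complex.sq_norm, Complex.sq_norm]; exact h2
  refine ⟨?_, hnorm⟩
  rw [Matrix.eta_fin_two V, ← h00, h01]
  simp

lemma su2_struct' {V : Matrix (Fin 2) (Fin 2) ℂ} (h : V ∈ Matrix.specialUnitaryGroup (Fin 2) ℂ) :
    ∃ a b : ℂ, V = !![a, -(starRingEnd ℂ) b; b, (starRingEnd ℂ) a] ∧
      ‖a‖^2 + ‖b‖^2 = 1 :=
  ⟨V 0 0, V 1 0, (su2_struct h).1, (su2_struct h).2⟩

lemma Zgate_zero : Zgate 0 = 1 := by
  simp [Zgate, Matrix.one_fin_two]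

lemma Zgate_add (α β : ℝ) : Zgate α * Zgate β = Zgate (α + β) := by
  have h1 : ((α:ℂ)/2 * I + (β:ℂ)/2 * I) = ((α+β:ℝ):ℂ)/2 * I := by push_cast; ring
  have h2 : (-((α:ℂ)/2 * I) + -((β:ℂ)/2 * I)) = -(((α+β:ℝ):ℂ)/2 * I) := by push_cast; ring
  simp [Zgate, Matrix.mul_fin_two, ← Complex.exp_add, h1, h2]

lemma sandwich (α : ℝ) (p q r s : ℂ) :
    Zgate α * !![p, q; r, s] * Zgate (-α) =
      !![p, exp ((α:ℂ) * I) * q; exp (-(α:ℂ) * I) * r, s] := by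
  ext i j
  fin_cases i <;> fin_cases j <;>
    simp [Zgate, Matrix.mul_apply, Fin.sum_univ_succ, ← Complex.exp_add]
  all_goals rw [show ∀ x y z : ℂ, cexp x * z * cexp y = cexp (x+y) * z from
    fun x y z => by rw [Complex.exp_add]; ring]
  · rw [show ((α:ℂ)/2 * I + -(α:ℂ)/2 * I) = 0 by ring]; simp
  · rw [show ((α:ℂ)/2 * I + -(-(α:ℂ)/2 * I)) = (α:ℂ) * I by ring]
  · rw [show (-((α:ℂ)/2 * I) + -(α:ℂ)/2 * I) = -((α:ℂ) * I) by ring]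
  · rw [show (-((α:ℂ)/2 * I) + -(-(α:ℂ)/2 * I)) = 0 by ring]; simp

lemma reach {M W : Matrix (Fin 2) (Fin 2) ℂ}
    (hM : M ∈ Matrix.specialUnitaryGroup (Fin 2) ℂ)
    (hW : W ∈ Matrix.specialUnitaryGroup (Fin 2) ℂ)
    (h00 : M 0 0 = W 0 0) :
    ∃ α : ℝ, Zgate α * M * Zgate (-α) = W := by
  obtain ⟨a, b, hMeq, hMn⟩ := su2_struct' hM
  obtain ⟨c, d, hWeq, hWn⟩ := su2_struct' hW
  have hMa : M 0 0 = a := by rw [hMeq]; simp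
  have hWc : W 0 0 = c := by rw [hWeq]; simp
  have hac : a = c := by rw [← hMa, ← hWc, h00]
  have habs2 : ‖b‖ ^ 2 = ‖d‖ ^ 2 := by rw [hac] at hMn; linarith
  have habs : ‖b‖ = ‖d‖ := by
    have := congrArg Real.sqrt habs2
    simpa [Real.sqrt_sq, norm_nonneg] using this
  refine ⟨Complex.arg b - Complex.arg d, ?_⟩
  have hb := Complex.norm_mul_exp_arg_mul_I b
  have hd := Complex.norm_mul_exp_arg_mul_I d
  have key : exp (-(↑(Complex.arg b - Complex.arg d) : ℂ) * I) * b = d := by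
    calc exp (-(↑(Complex.arg b - Complex.arg d) : ℂ) * I) * b
        = exp (-(↑(Complex.arg b - Complex.arg d) : ℂ) * I) *
            ((‖b‖ : ℂ) * exp ((Complex.arg b : ℂ) * I)) := by rw [hb]
      _ = (‖d‖ : ℂ) * exp (-(↑(Complex.arg b - Complex.arg d) : ℂ) * I
            + (Complex.arg b : ℂ) * I) := by rw [Complex.exp_add, habs]; ring
      _ = (‖d‖ : ℂ) * exp ((Complex.arg d : ℂ) * I) := by
            rw [show (-(↑(Complex.arg b - Complex.arg d) : ℂ) * I + (Complex.arg b : ℂ) * I)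
              = (Complex.arg d : ℂ) * I by push_cast; ring]
      _ = d := hd
  have key2 : exp ((↑(Complex.arg b - Complex.arg d) : ℂ) * I) * -((starRingEnd ℂ) b)
      = -((starRingEnd ℂ) d) := by
    have hc := congrArg (starRingEnd ℂ) key
    rw [_root_.map_mul, ← Complex.exp_conj] at hc
    have hconj : (starRingEnd ℂ) (-(↑(Complex.arg b - Complex.arg d) : ℂ) * I)
        = (↑(Complex.arg b - Complex.arg d) : ℂ) * I := by
      simp only [_root_.map_mul, map_neg, Complex.conj_ofReal, Complex.conj_I]
      ring
    rw [hconj] at hc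
    rw [mul_neg, hc]
  rw [hMeq, hWeq, sandwich, hac, key, key2]

lemma neg_mem_su {V : Matrix (Fin 2) (Fin 2) ℂ}
    (h : V ∈ Matrix.specialUnitaryGroup (Fin 2) ℂ) :
    -V ∈ Matrix.specialUnitaryGroup (Fin 2) ℂ := by
  rw [Matrix.mem_specialUnitaryGroup_iff, Matrix.mem_unitaryGroup_iff] at *
  refine ⟨?_, ?_⟩
  · rw [star_neg, neg_mul_neg]; exact h.1
  · rw [Matrix.det_neg]; simp [h.2]

set_option linter.unreachableTactic false in
set_option linter.unusedTactic false in
theorem covering_iff_Ufun_covers_disk (ω₁ ω₂ ω₃ : ℝ) :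
    (∀ V : Matrix (Fin 2) (Fin 2) ℂ, V ∈ Matrix.specialUnitaryGroup (Fin 2) ℂ →
      ∃ θ₀ θ₁ θ₂ θ₃ : ℝ, θ₀ + θ₁ + θ₂ + θ₃ = 0 ∧
        (Zgate θ₀ * Xgate ω₁ * Zgate θ₁ * Xgate ω₂ * Zgate θ₂ * Xgate ω₃ * Zgate θ₃ = V ∨
          Zgate θ₀ * Xgate ω₁ * Zgate θ₁ * Xgate ω₂ * Zgate θ₂ * Xgate ω₃ * Zgate θ₃ = -V)) ↔
    (∀ z : ℂ, ‖z‖ ≤ 1 →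
      ∃ u₁ u₂ : ℂ, ‖u₁‖ = 1 ∧ ‖u₂‖ = 1 ∧
        (Ufun ω₁ ω₂ ω₃ u₁ u₂ = z ∨ Ufun ω₁ ω₂ ω₃ u₁ u₂ = -z)) := by
  constructor
  · -- covering → disk
    intro hcov z hz
    set w : ℝ := Real.sqrt (1 - ‖z‖ ^ 2) with hwdef
    have hw2 : (w:ℝ)^2 = 1 - ‖z‖ ^ 2 := by
      rw [hwdef]; exact Real.sq_sqrt (by nlinarith [norm_nonneg z])
    have hzw : z * (starRingEnd ℂ) z + (w:ℂ)^2 = 1 := by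
      rw [Complex.mul_conj]
      rw [show ((w:ℂ)^2) = ((w^2 : ℝ) : ℂ) by push_cast; ring, hw2]
      rw [Complex.normSq_eq_norm_sq]
      push_cast; ring
    set V : Matrix (Fin 2) (Fin 2) ℂ := !![z, -(w:ℂ); (w:ℂ), (starRingEnd ℂ) z] with hVdef
    have hVmem : V ∈ Matrix.specialUnitaryGroup (Fin 2) ℂ := by
      rw [Matrix.mem_specialUnitaryGroup_iff, Matrix.mem_unitaryGroup_iff]
      constructor
      · show V * Vᴴ = 1
        ext i j
        fin_cases i <;> fin_cases j <;>
          simp [hVdef, Matrix.mul_apply, Fin.sum_univ_succ, Matrix.conjTranspose_apply,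
            Matrix.one_apply, Complex.conj_ofReal] <;>
          first
            | ring1
            | linear_combination hzw
            | linear_combination -hzw
      · simp [hVdef, Matrix.det_fin_two_of]
        first
          | ring1
          | linear_combination hzw
          | linear_combination -hzw
    obtain ⟨θ₀, θ₁, θ₂, θ₃, hsum, hcase⟩ := hcov V hVmem
    refine ⟨exp (-(θ₁:ℂ) * I), exp (-(θ₂:ℂ) * I), ?_, ?_, ?_⟩
    · simp [Complex.norm_exp]
    · simp [Complex.norm_exp]
    · have h00 := entry00 θ₀ θ₁ θ₂ θ₃ ω₁ ω₂ ω₃ hsum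
      rcases hcase with hP | hP
      · left; rw [← h00, hP, hVdef]; simp
      · right; rw [← h00, hP, hVdef]; simp
  · -- disk → covering
    intro h V hV
    obtain ⟨a, b, hVeq, hVn⟩ := su2_struct' hV
    have haV : V 0 0 = a := by rw [hVeq]; simp
    have ha1 : ‖a‖ ≤ 1 := by
      nlinarith [norm_nonneg a, norm_nonneg b, sq_nonneg (‖a‖ - 1),
        sq_nonneg (‖a‖ + 1)]
    obtain ⟨u₁, u₂, hu₁, hu₂, hcase⟩ := h a ha1
    set θ₁ : ℝ := -Complex.arg u₁ with hθ₁
    set θ₂ : ℝ := -Complex.arg u₂ with hθ₂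
    set θ₃ : ℝ := -(θ₁ + θ₂) with hθ₃
    have hQsum : (0:ℝ) + θ₁ + θ₂ + θ₃ = 0 := by rw [hθ₃]; ring
    set Q := Zgate 0 * Xgate ω₁ * Zgate θ₁ * Xgate ω₂ * Zgate θ₂ * Xgate ω₃ * Zgate θ₃ with hQdef
    have hQmem : Q ∈ Matrix.specialUnitaryGroup (Fin 2) ℂ :=
      mul_mem (mul_mem (mul_mem (mul_mem (mul_mem (mul_mem (Zgate_mem 0) (Xgate_mem ω₁))
        (Zgate_mem θ₁)) (Xgate_mem ω₂)) (Zgate_mem θ₂)) (Xgate_mem ω₃)) (Zgate_mem θ₃)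
    have hexp1 : exp (-(θ₁:ℂ) * I) = u₁ := by
      have h1 := Complex.norm_mul_exp_arg_mul_I u₁
      rw [hu₁] at h1
      rw [show (-(θ₁:ℂ) * I) = (Complex.arg u₁ : ℂ) * I by rw [hθ₁]; push_cast; ring]
      simpa using h1
    have hexp2 : exp (-(θ₂:ℂ) * I) = u₂ := by
      have h1 := Complex.norm_mul_exp_arg_mul_I u₂
      rw [hu₂] at h1
      rw [show (-(θ₂:ℂ) * I) = (Complex.arg u₂ : ℂ) * I by rw [hθ₂]; push_cast; ring]
      simpa using h1
    have hQ00 : Q 0 0 = Ufun ω₁ ω₂ ω₃ u₁ u₂ := by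
      rw [hQdef, entry00 0 θ₁ θ₂ θ₃ ω₁ ω₂ ω₃ hQsum, hexp1, hexp2]
    have expand : ∀ α : ℝ,
        Zgate α * Xgate ω₁ * Zgate θ₁ * Xgate ω₂ * Zgate θ₂ * Xgate ω₃ * Zgate (θ₃ - α)
          = Zgate α * Q * Zgate (-α) := by
      intro α
      rw [hQdef, Zgate_zero]
      rw [show θ₃ - α = θ₃ + (-α) by ring, ← Zgate_add]
      simp only [mul_assoc, one_mul]
    rcases hcase with hU | hU
    · obtain ⟨α, hα⟩ := reach hQmem hV (by rw [hQ00, hU, haV])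
      refine ⟨α, θ₁, θ₂, θ₃ - α, by rw [hθ₃]; ring, Or.inl ?_⟩
      rw [expand α, hα]
    · have hVneg := neg_mem_su hV
      obtain ⟨α, hα⟩ := reach hQmem hVneg (by rw [hQ00, hU]; simp [haV])
      refine ⟨α, θ₁, θ₂, θ₃ - α, by rw [hθ₃]; ring, Or.inr ?_⟩
      rw [expand α, hα]
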